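/- arXiv:1903.04113 — 4 statements merged into one kernel-verified Lean document; each statement's English description precedes it below -/
import Mathlib

section
/- A permutation p of {1,...,n} is sortable by one pass through a stack (i.e., s(p) is the identity) if and only if p avoids the pattern 231, i.e., there are no indices i < j < k with p(k) < p(i) < p(j). -/
/-- Auxiliary function: push `x` through the stack, popping all smaller entries
to the output. The stack is stored top-first. -/
def push (x : ℕ) : List ℕ → List ℕ → List ℕ × List ℕ
  | [], out => ([x], out)
  | t :: s, out => if t < x then push x s (out ++ [t]) else (x :: t :: s, out)

def sortAux : List ℕ → List ℕ → List ℕ → List ℕ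
  | [], stack, out => out ++ stack
  | x :: xs, stack, out =>
      let r := push x stack out
      sortAux xs r.1 r.2

/-- The stack sorting map `s`: it satisfies `s(∅) = ∅` and `s(L n R) = s(L) s(R) n`
where `n` is the maximal entry. -/
def stackSort (p : List ℕ) : List ℕ := sortAux p [] []

section StackSortAux

open List

lemma push_spec (x : ℕ) : ∀ (s out : List ℕ),
    push x s out = (x :: s.dropWhile (· < x), out ++ s.takeWhile (· < x)) := by
  intro s
  induction s with
  | nil => intro out; simp [push]
  | cons t s ih =>
    intro out
    by_cases h : t < x
    · simp [push, h, ih]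
    · simp [push, h]

lemma sortAux_cons (x : ℕ) (xs stack out : List ℕ) :
    sortAux (x :: xs) stack out
      = sortAux xs (x :: stack.dropWhile (· < x)) (out ++ stack.takeWhile (· < x)) := by
  rw [sortAux, push_spec]

lemma sortAux_out (xs : List ℕ) : ∀ (stack o1 o2 : List ℕ),
    sortAux xs stack (o1 ++ o2) = o1 ++ sortAux xs stack o2 := by
  induction xs with
  | nil => intro stack o1 o2; simp [sortAux]
  | cons x xs ih =>
    intro stack o1 o2
    rw [sortAux_cons, sortAux_cons, List.append_assoc, ih]

lemma sortAux_perm (xs : List ℕ) : ∀ (stack out : List ℕ),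
    (sortAux xs stack out).Perm (out ++ stack ++ xs) := by
  induction xs with
  | nil => intro stack out; simp [sortAux]
  | cons x xs ih =>
    intro stack out
    rw [sortAux_cons]
    refine (ih _ _).trans ?_
    have e1 : out ++ stack.takeWhile (· < x) ++ (x :: stack.dropWhile (· < x)) ++ xs
        = (out ++ stack.takeWhile (· < x)) ++ x :: (stack.dropWhile (· < x) ++ xs) := by simp
    have e2 : out ++ stack ++ x :: xs = (out ++ stack) ++ x :: xs := by simp
    rw [e1, e2]
    refine List.perm_middle.trans ?_
    refine Perm.trans ?_ List.perm_middle.symm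
    refine Perm.cons _ ?_
    have : out ++ stack.takeWhile (· < x) ++ (stack.dropWhile (· < x) ++ xs)
        = out ++ stack ++ xs := by
      simp only [List.append_assoc]
      congr 1
      rw [← List.append_assoc, List.takeWhile_append_dropWhile]
    exact this ▸ Perm.refl _

lemma mem_dropWhile_lt {s : List ℕ} {x : ℕ} (hs : s.Pairwise (· < ·)) (hx : x ∉ s) :
    ∀ y ∈ s.dropWhile (· < x), x < y := by
  induction s with
  | nil => simp
  | cons t s ih =>
    intro y hy
    rw [dropWhile_cons] at hy
    by_cases h : t < x
    · simp only [h, decide_eq_true_eq, decide_true, if_true] at hy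
      exact ih hs.tail (fun h' => hx (mem_cons_of_mem _ h')) y hy
    · simp only [h, decide_eq_true_eq, decide_false, if_false] at hy
      have hxt : x < t := lt_of_le_of_ne (not_lt.1 h)
        (by rintro rfl; exact hx (mem_cons_self))
      rcases mem_cons.1 hy with rfl | hy
      · exact hxt
      · exact hxt.trans (rel_of_pairwise_cons hs hy)

lemma mem_takeWhile_of_lt {s : List ℕ} {b c : ℕ} (hs : s.Pairwise (· < ·))
    (hb : b ∈ s) (hbc : b < c) : b ∈ s.takeWhile (· < c) := by
  induction s with
  | nil => simp at hb
  | cons t s ih =>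
    rcases mem_cons.1 hb with rfl | hb
    · rw [takeWhile_cons]; simp [hbc]
    · have htb : t < b := rel_of_pairwise_cons hs hb
      rw [takeWhile_cons]
      simp only [htb.trans hbc, decide_eq_true_eq, decide_true, if_true]
      exact mem_cons_of_mem _ (ih hs.tail hb)

lemma mem_takeWhile_lt {s : List ℕ} {x b : ℕ} (hb : b ∈ s.takeWhile (· < x)) : b < x := by
  simpa using List.mem_takeWhile_imp hb

lemma sorted_push {s : List ℕ} {x : ℕ} (hs : s.Pairwise (· < ·)) (hx : x ∉ s) :
    (x :: s.dropWhile (· < x)).Pairwise (· < ·) :=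
  pairwise_cons.2 ⟨mem_dropWhile_lt hs hx,
    (hs.sublist (List.dropWhile_sublist _))⟩

lemma nodup_push {stack xs : List ℕ} {x : ℕ} (h : (stack ++ x :: xs).Nodup) :
    ((x :: stack.dropWhile (· < x)) ++ xs).Nodup := by
  have h1 : (x :: (stack ++ xs)).Nodup := (List.perm_middle).nodup h
  exact h1.sublist ((List.dropWhile_sublist _).append_right xs |>.cons₂ x)

lemma not_mem_stack {stack xs : List ℕ} {x : ℕ} (h : (stack ++ x :: xs).Nodup) :
    x ∉ stack := by
  intro hx
  exact (List.Nodup.notMem ((List.perm_middle).nodup h)) (mem_append_left _ hx)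

lemma sortAux_sorted : ∀ (xs stack out : List ℕ),
    stack.Pairwise (· < ·) →
    (out ++ stack).Pairwise (· ≤ ·) →
    (∀ b ∈ out, ∀ y ∈ xs, b < y) →
    (∀ t ∈ stack, ¬ ∃ a c, a < t ∧ t < c ∧ [c, a] <+ xs) →
    (¬ ∃ a b c : ℕ, a < b ∧ b < c ∧ [b, c, a] <+ xs) →
    (stack ++ xs).Nodup →
    (sortAux xs stack out).Pairwise (· ≤ ·)
  | [], stack, out, _, h2, _, _, _, _ => by simpa [sortAux] using h2
  | x :: xs, stack, out, h1, h2, h3, h5, h6, h7 => by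
    rw [sortAux_cons]
    set T := stack.takeWhile (· < x) with hT
    set D := stack.dropWhile (· < x) with hD
    have hTD : T ++ D = stack := List.takeWhile_append_dropWhile
    have hxs : x ∉ stack := not_mem_stack h7
    have hdisj : List.Disjoint stack (x :: xs) := fun _ ha hb => ((List.nodup_append).1 h7).2.2 _ ha _ hb rfl
    have hsubT : T <+ stack := hTD ▸ List.sublist_append_left _ _
    have hsubD : D <+ stack := List.dropWhile_sublist _
    have h1' : (x :: D).Pairwise (· < ·) := sorted_push h1 hxs
    have hDgt : ∀ y ∈ D, x < y := mem_dropWhile_lt h1 hxs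
    -- cross facts from h2
    have h2' : (out.Pairwise (· ≤ ·)) ∧ stack.Pairwise (· ≤ ·) ∧
        ∀ a ∈ out, ∀ b ∈ stack, a ≤ b := List.pairwise_append.1 h2
    -- T-vs-D from h1
    have hTDlt : ∀ u ∈ T, ∀ v ∈ D, u < v := by
      have := hTD ▸ h1
      exact (List.pairwise_append.1 this).2.2
    -- new out-stack pairwise
    have h2new : ((out ++ T) ++ (x :: D)).Pairwise (· ≤ ·) := by
      rw [List.pairwise_append]
      refine ⟨h2.sublist ((hsubT.append_left out)), h1'.imp le_of_lt, ?_⟩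
      intro u hu v hv
      rcases mem_append.1 hu with hu' | hu'
      · rcases mem_cons.1 hv with rfl | hv'
        · exact (h3 u hu' v (mem_cons_self)).le
        · exact h2'.2.2 u hu' v (hsubD.mem hv')
      · rcases mem_cons.1 hv with rfl | hv'
        · exact (mem_takeWhile_lt hu').le
        · exact (hTDlt u hu' v hv').le
    -- new h3
    have h3new : ∀ b ∈ out ++ T, ∀ y ∈ xs, b < y := by
      intro b hb y hy
      rcases mem_append.1 hb with hb | hb
      · exact h3 b hb y (mem_cons_of_mem _ hy)
      · by_contra hc
        have hyb : y < b := lt_of_le_of_ne (not_lt.1 hc)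
          (fun h => (hdisj (hsubT.mem hb) (h ▸ mem_cons_of_mem _ hy)))
        exact h5 b (hsubT.mem hb) ⟨y, x, hyb, mem_takeWhile_lt hb,
          (List.singleton_sublist.2 hy).cons₂ x⟩
    -- new h5
    have h5new : ∀ t ∈ x :: D, ¬ ∃ a c, a < t ∧ t < c ∧ [c, a] <+ xs := by
      intro t ht
      rcases mem_cons.1 ht with rfl | ht
      · rintro ⟨a, c, ha, hc, hsub⟩
        exact h6 ⟨a, t, c, ha, hc, hsub.cons₂ t⟩
      · rintro ⟨a, c, ha, hc, hsub⟩
        exact h5 t (hsubD.mem ht) ⟨a, c, ha, hc, hsub.cons x⟩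
    have h6new : ¬ ∃ a b c : ℕ, a < b ∧ b < c ∧ [b, c, a] <+ xs := by
      rintro ⟨a, b, c, ha, hb, hsub⟩
      exact h6 ⟨a, b, c, ha, hb, hsub.cons x⟩
    exact sortAux_sorted xs (x :: D) (out ++ T) h1' h2new h3new h5new h6new (nodup_push h7)

lemma mem_sortAux {xs stack out : List ℕ} {a : ℕ} (h : a ∈ xs) :
    a ∈ sortAux xs stack out :=
  (sortAux_perm xs stack out).mem_iff.2 (by simp [h])

lemma sublist_pair_of_out {xs stack out : List ℕ} {a b : ℕ}
    (hb : b ∈ out) (ha : a ∈ xs) : [b, a] <+ sortAux xs stack out := by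
  obtain ⟨o1, o2, rfl⟩ := List.append_of_mem hb
  have : o1 ++ b :: o2 = (o1 ++ [b]) ++ o2 := by simp
  rw [this, sortAux_out, List.append_assoc]
  have h1 : [b, a] <+ [b] ++ sortAux xs stack o2 := by
    refine Sublist.cons₂ b ?_
    exact List.singleton_sublist.2 (mem_sortAux ha)
  exact h1.trans (List.sublist_append_right o1 _)

lemma sublist_pair_aux2 : ∀ (xs stack out : List ℕ) {a b c : ℕ},
    b < c → stack.Pairwise (· < ·) → (stack ++ xs).Nodup →
    b ∈ out ++ stack → [c, a] <+ xs →
    [b, a] <+ sortAux xs stack out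
  | [], stack, out, a, b, c, hbc, h1, h7, hb, hsub => by simp at hsub
  | x :: xs, stack, out, a, b, c, hbc, h1, h7, hb, hsub => by
    have hxs : x ∉ stack := not_mem_stack h7
    rw [sortAux_cons]
    cases hsub with
    | cons _ hsub =>
      refine sublist_pair_aux2 xs _ _ hbc (sorted_push h1 hxs) (nodup_push h7) ?_ hsub
      rcases mem_append.1 hb with hb' | hb'
      · exact mem_append_left _ (mem_append_left _ hb')
      · rw [← List.takeWhile_append_dropWhile (p := fun t => decide (t < x)) (l := stack)] at hb'
        rcases mem_append.1 hb' with hb'' | hb''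
        · exact mem_append_left _ (mem_append_right _ hb'')
        · exact mem_append_right _ (mem_cons_of_mem _ hb'')
    | cons_cons _ hsub =>
      -- here x = c and [a] <+ xs
      have ha : a ∈ xs := List.singleton_sublist.1 hsub
      refine sublist_pair_of_out ?_ ha
      rcases mem_append.1 hb with hb' | hb'
      · exact mem_append_left _ hb'
      · exact mem_append_right _ (mem_takeWhile_of_lt h1 hb' hbc)

lemma sublist_pair_aux1 : ∀ (xs stack out : List ℕ) {a b c : ℕ},
    b < c → stack.Pairwise (· < ·) → (stack ++ xs).Nodup →
    [b, c, a] <+ xs →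
    [b, a] <+ sortAux xs stack out
  | [], stack, out, a, b, c, hbc, h1, h7, hsub => by simp at hsub
  | x :: xs, stack, out, a, b, c, hbc, h1, h7, hsub => by
    have hxs : x ∉ stack := not_mem_stack h7
    rw [sortAux_cons]
    cases hsub with
    | cons _ hsub =>
      exact sublist_pair_aux1 xs _ _ hbc (sorted_push h1 hxs) (nodup_push h7) hsub
    | cons_cons _ hsub =>
      -- x = b, [c, a] <+ xs
      refine sublist_pair_aux2 xs _ _ hbc (sorted_push h1 hxs) (nodup_push h7) ?_ hsub
      exact mem_append_right _ (mem_cons_self)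

lemma pat_iff (p : List ℕ) :
    (∃ i j k : ℕ, i < j ∧ j < k ∧ k < p.length ∧
        p.getD k 0 < p.getD i 0 ∧ p.getD i 0 < p.getD j 0)
    ↔ ∃ a b c : ℕ, a < b ∧ b < c ∧ [b, c, a] <+ p := by
  constructor
  · rintro ⟨i, j, k, hij, hjk, hk, h1, h2⟩
    have hj : j < p.length := hjk.trans hk
    have hi : i < p.length := hij.trans hj
    refine ⟨p.getD k 0, p.getD i 0, p.getD j 0, h1, h2, ?_⟩
    have hs := List.map_getElem_sublist (l := p)
      (is := [⟨i, hi⟩, ⟨j, hj⟩, ⟨k, hk⟩]) (by simp [hij, hjk, hij.trans hjk])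
    rw [List.getD_eq_getElem (hn := hi), List.getD_eq_getElem (hn := hj),
      List.getD_eq_getElem (hn := hk)]
    simpa [List.get_eq_getElem] using hs
  · rintro ⟨a, b, c, hab, hbc, hsub⟩
    obtain ⟨is, heq, hpw⟩ := List.sublist_eq_map_getElem hsub
    match is, heq, hpw with
    | [i, j, k], heq, hpw =>
      simp only [List.map_cons, List.map_nil, List.cons.injEq, and_true] at heq
      obtain ⟨hb, hc, ha⟩ := heq
      have hij : i < j := List.rel_of_pairwise_cons hpw (by simp)
      have hjk : j < k := List.rel_of_pairwise_cons hpw.tail (by simp)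
      refine ⟨i, j, k, hij, hjk, k.isLt, ?_, ?_⟩
      · rw [List.getD_eq_getElem (hn := k.isLt), List.getD_eq_getElem (hn := i.isLt)]
        simpa [ha, hb] using hab
      · rw [List.getD_eq_getElem (hn := j.isLt), List.getD_eq_getElem (hn := i.isLt)]
        simpa [hb, hc] using hbc


end StackSortAux

open List in
/-- A permutation `p` of `{1, …, n}` (in one-line notation, as a list) is stack
sortable iff it avoids the pattern 231: there are no `i < j < k` with
`p(k) < p(i) < p(j)`. -/
theorem stmt_1 (n : ℕ) (p : List ℕ) (hp : p.Perm (List.range' 1 n)) :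
    stackSort p = List.range' 1 n ↔
      ¬ ∃ i j k : ℕ, i < j ∧ j < k ∧ k < p.length ∧
        p.getD k 0 < p.getD i 0 ∧ p.getD i 0 < p.getD j 0 := by
  have hndp : p.Nodup := hp.nodup_iff.2 (List.nodup_range' (s := 1) (n := n))
  have hperm : (stackSort p).Perm p := by
    have h := sortAux_perm p [] []
    simpa [stackSort] using h
  rw [pat_iff]
  constructor
  · intro heq
    rintro ⟨a, b, c, hab, hbc, hsub⟩
    have hba : [b, a] <+ stackSort p :=
      sublist_pair_aux1 p [] [] hbc (by simp) (by simpa using hndp) hsub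
    rw [heq] at hba
    have hlt : b < a :=
      List.rel_of_pairwise_cons ((List.pairwise_lt_range' (s := 1) (n := n)).sublist hba) (by simp)
    exact absurd hab (not_lt.2 hlt.le)
  · intro hnopat
    have hsorted : (stackSort p).Pairwise (· ≤ ·) :=
      sortAux_sorted p [] [] (by simp) (by simp) (by simp) (by simp) hnopat
        (by simpa using hndp)
    exact (hperm.trans hp).eq_of_pairwise (fun _ _ _ _ h1 h2 => le_antisymm h1 h2) hsorted
      ((List.pairwise_lt_range' (s := 1) (n := n)).imp le_of_lt)
end

section
/- The number of 231-avoiding permutations of length n equals the Catalan number C_n = (1/(n+1)) * binomial(2n, n). -/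
open Finset

def Av (n : ℕ) : Finset (Equiv.Perm (Fin n)) :=
  (Finset.univ : Finset (Equiv.Perm (Fin n))).filter (fun p =>
      ¬ ∃ i j k : Fin n, i < j ∧ j < k ∧ p k < p i ∧ p i < p j)

lemma mem_Av {n : ℕ} {p : Equiv.Perm (Fin n)} :
    p ∈ Av n ↔ ¬ ∃ i j k : Fin n, i < j ∧ j < k ∧ p k < p i ∧ p i < p j := by
  simp [Av]

variable {n m : ℕ}

def glue (hm : m ≤ n) (q : Equiv.Perm (Fin m)) (r : Equiv.Perm (Fin (n - m))) :
    Equiv.Perm (Fin (n + 1)) where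
  toFun i :=
    if h : i.val < m then ⟨q ⟨i, h⟩, by have := (q ⟨i, h⟩).isLt; omega⟩
    else if h2 : i.val = m then ⟨n, by omega⟩
    else ⟨m + r ⟨i - (m + 1), by have := i.isLt; omega⟩,
      by have := (r ⟨i - (m + 1), by have := i.isLt; omega⟩).isLt; omega⟩
  invFun v :=
    if h : v.val < m then ⟨q.symm ⟨v, h⟩, by have := (q.symm ⟨v, h⟩).isLt; omega⟩
    else if h2 : v.val = n then ⟨m, by omega⟩
    else ⟨m + 1 + r.symm ⟨v - m, by have := v.isLt; omega⟩,
      by have := (r.symm ⟨v - m, by have := v.isLt; omega⟩).isLt; omega⟩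
  left_inv i := by
    by_cases h : i.val < m
    · have h1 : (q ⟨i, h⟩).val < m := (q _).isLt
      simp [h, h1, Fin.eta]
    · by_cases h2 : i.val = m
      · have hnm : ¬ (n < m) := by omega
        simp only [h, h2, dif_neg, dite_false, dif_pos, dite_true, hnm, lt_irrefl]
        apply Fin.ext; simp only [Fin.val_mk]; omega
      · have hi := i.isLt
        have h3 : ¬ (m + (r ⟨i - (m+1), by omega⟩).val < m) := by omega
        have h4 : m + (r ⟨i - (m+1), by omega⟩).val ≠ n := by
          have := (r ⟨i - (m+1), by omega⟩).isLt; omega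
        simp only [h, h2, h3, h4, dif_neg, dite_false]
        ext
        simp only [Nat.add_sub_cancel_left, Fin.eta, Equiv.symm_apply_apply]
        omega
  right_inv v := by
    by_cases h : v.val < m
    · have h1 : (q.symm ⟨v, h⟩).val < m := (q.symm _).isLt
      simp [h, h1, Fin.eta]
    · by_cases h2 : v.val = n
      · have hnm : ¬ (n < m) := by omega
        simp only [h, h2, dif_neg, dite_false, dif_pos, dite_true, hnm, lt_irrefl]
        apply Fin.ext; simp only [Fin.val_mk]; omega
      · have hv := v.isLt
        have h3 : ¬ (m + 1 + (r.symm ⟨v - m, by omega⟩).val < m) := by omega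
        have h4 : m + 1 + (r.symm ⟨v - m, by omega⟩).val ≠ m := by omega
        simp only [h, h2, h3, h4, dif_neg, dite_false]
        ext
        simp only [Nat.add_sub_cancel_left, Fin.eta, Equiv.apply_symm_apply]
        omega

lemma glue_val_lt (hm : m ≤ n) (q : Equiv.Perm (Fin m)) (r : Equiv.Perm (Fin (n - m)))
    {i : Fin (n + 1)} (h : i.val < m) : ((glue hm q r) i).val = q ⟨i, h⟩ := by
  simp [glue, h]

lemma glue_val_eq (hm : m ≤ n) (q : Equiv.Perm (Fin m)) (r : Equiv.Perm (Fin (n - m)))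
    {i : Fin (n + 1)} (h : i.val = m) : ((glue hm q r) i).val = n := by
  simp [glue, h]

lemma glue_val_gt (hm : m ≤ n) (q : Equiv.Perm (Fin m)) (r : Equiv.Perm (Fin (n - m)))
    {i : Fin (n + 1)} (h : m < i.val) :
    ((glue hm q r) i).val = m + r ⟨i - (m + 1), by have := i.isLt; omega⟩ := by
  have h1 : ¬ i.val < m := by omega
  have h2 : i.val ≠ m := by omega
  simp [glue, h1, h2]

lemma glue_avoid (hm : m ≤ n) {q : Equiv.Perm (Fin m)} {r : Equiv.Perm (Fin (n - m))}
    (hq : q ∈ Av m) (hr : r ∈ Av (n - m)) : glue hm q r ∈ Av (n + 1) := by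
  rw [mem_Av] at hq hr ⊢
  rintro ⟨i, j, k, hij, hjk, h1, h2⟩
  rw [Fin.lt_def] at hij hjk h1 h2
  rcases lt_trichotomy k.val m with hk | hk | hk
  · -- all three in the first block
    have hi : i.val < m := by omega
    have hj : j.val < m := by omega
    rw [glue_val_lt hm q r hi] at h1 h2
    rw [glue_val_lt hm q r hj] at h2
    rw [glue_val_lt hm q r hk] at h1
    exact hq ⟨⟨i, hi⟩, ⟨j, hj⟩, ⟨k, hk⟩, by rw [Fin.lt_def]; exact hij,
      by rw [Fin.lt_def]; exact hjk, by rw [Fin.lt_def]; exact h1,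
      by rw [Fin.lt_def]; exact h2⟩
  · have := glue_val_eq hm q r hk
    have := ((glue hm q r) i).isLt
    omega
  · rcases lt_trichotomy i.val m with hi | hi | hi
    · have hpi : ((glue hm q r) i).val < m := by
        rw [glue_val_lt hm q r hi]; exact (q _).isLt
      have hpk : m ≤ ((glue hm q r) k).val := by
        rw [glue_val_gt hm q r hk]; omega
      omega
    · have := glue_val_eq hm q r hi
      have := ((glue hm q r) j).isLt
      omega
    · have hj : m < j.val := by omega
      rw [glue_val_gt hm q r hi] at h1 h2
      rw [glue_val_gt hm q r hj] at h2
      rw [glue_val_gt hm q r hk] at h1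
      have hik := i.isLt
      exact hr ⟨⟨i - (m+1), by omega⟩, ⟨j - (m+1), by omega⟩, ⟨k - (m+1), by omega⟩,
        by rw [Fin.lt_def]; simp only [Fin.val_mk]; omega,
        by rw [Fin.lt_def]; simp only [Fin.val_mk]; omega,
        by rw [Fin.lt_def]; exact Nat.lt_of_add_lt_add_left h1,
        by rw [Fin.lt_def]; exact Nat.lt_of_add_lt_add_left h2⟩

lemma exists_glue (hm : m ≤ n) {p : Equiv.Perm (Fin (n + 1))} (hp : p ∈ Av (n + 1))
    (hlast : p ⟨m, by omega⟩ = Fin.last n) :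
    ∃ q ∈ Av m, ∃ r ∈ Av (n - m), glue hm q r = p := by
  rw [mem_Av] at hp
  -- the set of positions carrying small values
  set S : Finset (Fin (n + 1)) :=
    (Finset.Iio (⟨m, by omega⟩ : Fin (n + 1))).map p.symm.toEmbedding with hS
  have hScard : S.card = m := by
    rw [hS, Finset.card_map, Fin.card_Iio]
  have hmemS : ∀ x, x ∈ S ↔ (p x).val < m := by
    intro x
    rw [hS]
    simp only [Finset.mem_map, Finset.mem_Iio, Equiv.toEmbedding_apply]
    constructor
    · rintro ⟨a, ha, rfl⟩
      rw [Equiv.apply_symm_apply]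
      exact ha
    · intro h
      exact ⟨p x, h, p.symm_apply_apply x⟩
  -- positions before m carry values < m
  have block : ∀ i : Fin (n + 1), i.val < m → (p i).val < m := by
    by_contra hblock
    push_neg at hblock
    obtain ⟨i0, hi0, hge⟩ := hblock
    have hi0ne : i0 ≠ (⟨m, by omega⟩ : Fin (n + 1)) := by
      intro h; rw [h] at hi0; exact absurd hi0 (lt_irrefl m)
    have hpi0 : (p i0).val < n := by
      have h1 : p i0 ≠ Fin.last n := by
        intro h; exact hi0ne (p.injective (h.trans hlast.symm))
      have h2 : (p i0).val ≠ n := fun h => h1 (Fin.ext h)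
      have := (p i0).isLt; omega
    have hSsub : ¬ S ⊆ Finset.Iio (⟨m, by omega⟩ : Fin (n + 1)) := by
      intro hsub
      have heq : S = Finset.Iio (⟨m, by omega⟩ : Fin (n + 1)) :=
        Finset.eq_of_subset_of_card_le hsub
          (by rw [Fin.card_Iio]; simp only [Fin.val_mk]; omega)
      have : i0 ∈ S := by rw [heq, Finset.mem_Iio, Fin.lt_def]; exact hi0
      rw [hmemS] at this; omega
    obtain ⟨k, hkS, hkT⟩ := Finset.not_subset.mp hSsub
    rw [hmemS] at hkS
    rw [Finset.mem_Iio, Fin.lt_def] at hkT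
    push_neg at hkT
    simp only [Fin.val_mk] at hkT
    have hkne : k.val ≠ m := by
      intro h
      have : k = (⟨m, by omega⟩ : Fin (n + 1)) := Fin.ext h
      rw [this, hlast] at hkS
      simp [Fin.last] at hkS; omega
    exact hp ⟨i0, ⟨m, by omega⟩, k, by rw [Fin.lt_def]; exact hi0,
      by rw [Fin.lt_def]; simpa using (by omega : m < k.val),
      by rw [Fin.lt_def]; omega,
      by rw [Fin.lt_def, hlast]; simpa [Fin.last] using hpi0⟩
  -- positions after m carry values in [m, n)
  have block2 : ∀ k : Fin (n + 1), m < k.val → m ≤ (p k).val ∧ (p k).val < n := by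
    intro k hk
    have hkne : k ≠ (⟨m, by omega⟩ : Fin (n + 1)) := by
      intro h; rw [h] at hk; simp at hk
    have h2 : (p k).val < n := by
      have h1 : p k ≠ Fin.last n := by
        intro h; exact hkne (p.injective (h.trans hlast.symm))
      have := (p k).isLt
      have : (p k).val ≠ n := fun h => h1 (Fin.ext h)
      omega
    refine ⟨?_, h2⟩
    by_contra hlt
    push_neg at hlt
    -- then k ∈ S, but S = Iio m
    have hsub : Finset.Iio (⟨m, by omega⟩ : Fin (n + 1)) ⊆ S := by
      intro x hx
      rw [Finset.mem_Iio, Fin.lt_def] at hx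
      rw [hmemS]
      exact block x hx
    have heq : Finset.Iio (⟨m, by omega⟩ : Fin (n + 1)) = S :=
      Finset.eq_of_subset_of_card_le hsub
        (by rw [Fin.card_Iio]; simp only [Fin.val_mk]; omega)
    have : k ∈ S := by rw [hmemS]; exact hlt
    rw [← heq, Finset.mem_Iio, Fin.lt_def] at this
    simp only [Fin.val_mk] at this; omega
  -- construct the two restricted permutations
  have hf : Function.Injective (fun i : Fin m =>
      (⟨(p ⟨i.val, by omega⟩).val, block _ i.isLt⟩ : Fin m)) := by
    intro a b hab
    simp only [Fin.mk.injEq] at hab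
    have := p.injective (Fin.ext hab : p ⟨a.val, by omega⟩ = p ⟨b.val, by omega⟩)
    simpa [Fin.mk.injEq, Fin.ext_iff] using this
  have hg : Function.Injective (fun j : Fin (n - m) =>
      (⟨(p ⟨m + 1 + j.val, by have := j.isLt; omega⟩).val - m,
        by have h := block2 ⟨m + 1 + j.val, by have := j.isLt; omega⟩ (by simp only [Fin.val_mk]; omega)
           omega⟩ : Fin (n - m))) := by
    intro a b hab
    simp only [Fin.mk.injEq] at hab
    have ha := block2 ⟨m + 1 + a.val, by have := a.isLt; omega⟩ (by simp only [Fin.val_mk]; omega)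
    have hb := block2 ⟨m + 1 + b.val, by have := b.isLt; omega⟩ (by simp only [Fin.val_mk]; omega)
    have hv : (p ⟨m + 1 + a.val, by have := a.isLt; omega⟩).val
        = (p ⟨m + 1 + b.val, by have := b.isLt; omega⟩).val := by omega
    have := p.injective (Fin.ext hv)
    simpa [Fin.mk.injEq, Fin.ext_iff] using this
  let q : Equiv.Perm (Fin m) := Equiv.ofBijective _ (Finite.injective_iff_bijective.mp hf)
  let r : Equiv.Perm (Fin (n - m)) := Equiv.ofBijective _ (Finite.injective_iff_bijective.mp hg)
  have hq_apply : ∀ i : Fin m, (q i).val = (p ⟨i.val, by omega⟩).val := fun i => rfl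
  have hr_apply : ∀ j : Fin (n - m),
      (r j).val = (p ⟨m + 1 + j.val, by have := j.isLt; omega⟩).val - m := fun j => rfl
  refine ⟨q, ?_, r, ?_, ?_⟩
  · rw [mem_Av]
    rintro ⟨a, b, c, hab, hbc, h1, h2⟩
    rw [Fin.lt_def] at hab hbc h1 h2
    rw [hq_apply, hq_apply] at h1
    rw [hq_apply, hq_apply] at h2
    exact hp ⟨⟨a.val, by omega⟩, ⟨b.val, by omega⟩, ⟨c.val, by omega⟩,
      by rw [Fin.lt_def]; exact hab, by rw [Fin.lt_def]; exact hbc,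
      by rw [Fin.lt_def]; exact h1, by rw [Fin.lt_def]; exact h2⟩
  · rw [mem_Av]
    rintro ⟨a, b, c, hab, hbc, h1, h2⟩
    rw [Fin.lt_def] at hab hbc h1 h2
    rw [hr_apply, hr_apply] at h1
    rw [hr_apply, hr_apply] at h2
    have ha := block2 ⟨m + 1 + a.val, by have := a.isLt; omega⟩ (by simp only [Fin.val_mk]; omega)
    have hb := block2 ⟨m + 1 + b.val, by have := b.isLt; omega⟩ (by simp only [Fin.val_mk]; omega)
    have hc := block2 ⟨m + 1 + c.val, by have := c.isLt; omega⟩ (by simp only [Fin.val_mk]; omega)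
    exact hp ⟨⟨m + 1 + a.val, by have := a.isLt; omega⟩,
      ⟨m + 1 + b.val, by have := b.isLt; omega⟩,
      ⟨m + 1 + c.val, by have := c.isLt; omega⟩,
      by rw [Fin.lt_def]; simp only [Fin.val_mk]; omega, by rw [Fin.lt_def]; simp only [Fin.val_mk]; omega,
      by rw [Fin.lt_def]; omega, by rw [Fin.lt_def]; omega⟩
  · apply Equiv.ext
    intro i
    apply Fin.ext
    rcases lt_trichotomy i.val m with hi | hi | hi
    · rw [glue_val_lt hm q r hi, hq_apply]
    · rw [glue_val_eq hm q r hi]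
      have : i = (⟨m, by omega⟩ : Fin (n + 1)) := Fin.ext hi
      rw [this, hlast]
      rfl
    · rw [glue_val_gt hm q r hi, hr_apply]
      have hik := i.isLt
      have heq : (⟨m + 1 + (i.val - (m + 1)), by omega⟩ : Fin (n + 1)) = i :=
        Fin.ext (by simp only [Fin.val_mk]; omega)
      have hb := block2 i hi
      rw [heq]
      omega

lemma glue_inj (hm : m ≤ n) {q q' : Equiv.Perm (Fin m)} {r r' : Equiv.Perm (Fin (n - m))}
    (h : glue hm q r = glue hm q' r') : q = q' ∧ r = r' := by
  constructor
  · apply Equiv.ext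
    intro a
    apply Fin.ext
    have ha : (⟨a.val, by have := a.isLt; omega⟩ : Fin (n + 1)).val < m := a.isLt
    have h1 := glue_val_lt hm q r ha
    have h2 := glue_val_lt hm q' r' ha
    rw [h] at h1
    rw [h1] at h2
    simpa using h2
  · apply Equiv.ext
    intro b
    apply Fin.ext
    set x : Fin (n + 1) := ⟨m + 1 + b.val, by have := b.isLt; omega⟩ with hxdef
    have hxv : x.val = m + 1 + b.val := rfl
    have hb : m < x.val := by omega
    have h1 := glue_val_gt hm q r hb
    have h2 := glue_val_gt hm q' r' hb
    rw [h] at h1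
    rw [h1] at h2
    have hidx : (⟨x.val - (m + 1), by have := x.isLt; omega⟩ : Fin (n - m)) = b :=
      Fin.ext (by simp only [Fin.val_mk]; omega)
    rw [hidx] at h2
    omega

lemma card_fiber (hm : m ≤ n) :
    ((Av (n + 1)).filter (fun p => p ⟨m, by omega⟩ = Fin.last n)).card
      = (Av m).card * (Av (n - m)).card := by
  rw [← Finset.card_product]
  refine (Finset.card_bij (fun qr _ => glue hm qr.1 qr.2) ?_ ?_ ?_).symm
  · rintro ⟨q, r⟩ hqr
    rw [Finset.mem_product] at hqr
    rw [Finset.mem_filter]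
    refine ⟨glue_avoid hm hqr.1 hqr.2, ?_⟩
    apply Fin.ext
    rw [glue_val_eq hm q r (by simp only [Fin.val_mk])]
    simp [Fin.last]
  · rintro ⟨q, r⟩ _ ⟨q', r'⟩ _ h
    obtain ⟨h1, h2⟩ := glue_inj hm h
    simp only [Prod.mk.injEq]
    exact ⟨h1, h2⟩
  · intro p hp
    rw [Finset.mem_filter] at hp
    obtain ⟨q, hq, r, hr, hglue⟩ := exists_glue hm hp.1 hp.2
    exact ⟨(q, r), Finset.mem_product.mpr ⟨hq, hr⟩, hglue⟩

lemma Av_card (n : ℕ) : (Av n).card = catalan n := by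
  induction n using Nat.strong_induction_on with
  | _ n ih =>
    obtain _ | n := n
    · rw [catalan_zero, Av,
        Finset.filter_true_of_mem (fun p _ => by rintro ⟨i, -⟩; exact i.elim0),
        Finset.card_univ]
      simp
    · rw [catalan_succ,
        Finset.card_eq_sum_card_fiberwise
          (f := fun p : Equiv.Perm (Fin (n + 1)) => p.symm (Fin.last n))
          (t := Finset.univ) (fun _ _ => Finset.mem_univ _)]
      apply Finset.sum_congr rfl
      intro m _
      have hfil : (Av (n + 1)).filter (fun p => p.symm (Fin.last n) = m)
          = (Av (n + 1)).filter
              (fun p => p ⟨m.val, by have := m.isLt; omega⟩ = Fin.last n) := by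
        apply Finset.filter_congr
        intro p _
        rw [Equiv.symm_apply_eq]
        constructor
        · intro h; exact h.symm
        · intro h; exact h.symm
      rw [hfil, card_fiber (Fin.is_le m), ih m.val (by omega),
        ih (n - m.val) (by omega)]


/-- The number of 231-avoiding permutations of `{1, …, n}` equals the `n`-th
Catalan number. A permutation `p` avoids 231 iff there are no indices
`i < j < k` with `p(k) < p(i) < p(j)`. -/
theorem stmt_2 (n : ℕ) :
    ((Finset.univ : Finset (Equiv.Perm (Fin n))).filter (fun p =>
        ¬ ∃ i j k : Fin n, i < j ∧ j < k ∧ p k < p i ∧ p i < p j)).card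
      = catalan n := by
  exact Av_card n
end

section
/- Let g(x) = (1+x)·(2−x)^{2−x}·x^{−3x}·(1−x)^{x−1}·(1−2x)^{2x−1}·((x+1)/4)^x for x ∈ (0, 1/2). Then g attains its maximum on (0,1/2) at x₀ = (1/12)(27 + 12√417)^{1/3} − 13/(4(27 + 12√417)^{1/3}) + 1/4, and g(x₀) < 12.533. -/
open Real

noncomputable def g (x : ℝ) : ℝ :=
  (1 + x) * (2 - x) ^ (2 - x) * x ^ (-3 * x) * (1 - x) ^ (x - 1) *
    (1 - 2 * x) ^ (2 * x - 1) * ((x + 1) / 4) ^ x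

noncomputable def x₀ : ℝ :=
  (1 / 12) * (27 + 12 * Real.sqrt 417) ^ ((1 : ℝ) / 3) -
    13 / (4 * (27 + 12 * Real.sqrt 417) ^ ((1 : ℝ) / 3)) + 1 / 4

/-- the log of `g`. -/
noncomputable def L (x : ℝ) : ℝ :=
  Real.log (1 + x) + Real.log (2 - x) * (2 - x) + Real.log x * (-3 * x) +
    Real.log (1 - x) * (x - 1) + Real.log (1 - 2 * x) * (2 * x - 1) +
    Real.log ((x + 1) / 4) * x

/-- the derivative of `L`. -/
noncomputable def Dv (x : ℝ) : ℝ :=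
  Real.log (1 - x) + 2 * Real.log (1 - 2 * x) + Real.log ((x + 1) / 4) -
    3 * Real.log x - Real.log (2 - x)

lemma cubic_x0 : 4 * x₀ ^ 3 - 3 * x₀ ^ 2 + 4 * x₀ - 1 = 0 := by
  have hs : Real.sqrt 417 ^ 2 = 417 := Real.sq_sqrt (by norm_num)
  have hs0 : (0:ℝ) < Real.sqrt 417 := Real.sqrt_pos.mpr (by norm_num)
  set s := Real.sqrt 417 with hsdef
  have hc : (0:ℝ) < 27 + 12 * s := by linarith
  set t := (27 + 12 * s) ^ ((1:ℝ)/3) with htdef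
  have ht0 : 0 < t := Real.rpow_pos_of_pos hc _
  have ht : t ^ 3 = 27 + 12 * s := by
    rw [htdef, ← Real.rpow_natCast ((27 + 12*s) ^ ((1:ℝ)/3)) 3, ← Real.rpow_mul hc.le]
    norm_num
  have htne : t ≠ 0 := ne_of_gt ht0
  unfold x₀
  rw [← htdef]
  field_simp
  linear_combination (64*t^3 + 768*s - 1728) * ht + 9216 * hs

/-- the cubic is strictly decreasing. -/
lemma cubic_anti {u v : ℝ} (h : u < v) :
    1 - 4*v + 3*v^2 - 4*v^3 < 1 - 4*u + 3*u^2 - 4*u^3 := by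
  nlinarith [sq_nonneg (u - v), sq_nonneg (u + v), sq_nonneg (2*(u+v) - 1), sq_nonneg u, sq_nonneg v]

lemma x0_gt : (0.288391892617 : ℝ) < x₀ := by
  by_contra h
  push_neg at h
  rcases eq_or_lt_of_le h with h | h
  · have h2 := cubic_x0; rw [h] at h2; norm_num at h2
  · have h2 := cubic_anti h
    have h3 := cubic_x0
    nlinarith
lemma x0_lt : x₀ < (0.288391892620 : ℝ) := by
  by_contra h
  push_neg at h
  rcases eq_or_lt_of_le h with h | h
  · have h2 := cubic_x0; rw [← h] at h2; norm_num at h2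
  · have h2 := cubic_anti h
    have h3 := cubic_x0
    nlinarith

lemma x0_mem : x₀ ∈ Set.Ioo (0:ℝ) (1/2) := by
  constructor
  · have := x0_gt; norm_num at this ⊢; linarith
  · have := x0_lt; norm_num at this ⊢; linarith

lemma g_eq_exp_L {x : ℝ} (hx : x ∈ Set.Ioo (0:ℝ) (1/2)) : g x = Real.exp (L x) := by
  obtain ⟨h0, h2⟩ := hx
  have h2' : x < 1/2 := h2
  have h1 : (0:ℝ) < 1 + x := by linarith
  have h3 : (0:ℝ) < 2 - x := by linarith
  have h4 : (0:ℝ) < 1 - x := by linarith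
  have h5 : (0:ℝ) < 1 - 2*x := by linarith
  have h6 : (0:ℝ) < (x + 1)/4 := by linarith
  rw [g, Real.rpow_def_of_pos h3, Real.rpow_def_of_pos h0, Real.rpow_def_of_pos h4,
    Real.rpow_def_of_pos h5, Real.rpow_def_of_pos h6]
  rw [L]
  nth_rewrite 1 [← Real.exp_log h1]
  rw [← Real.exp_add, ← Real.exp_add, ← Real.exp_add, ← Real.exp_add, ← Real.exp_add]

lemma hasDerivAt_L {x : ℝ} (hx : x ∈ Set.Ioo (0:ℝ) (1/2)) : HasDerivAt L (Dv x) x := by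
  obtain ⟨h0, h2⟩ := hx
  have h2' : x < 1/2 := h2
  have h1 : (0:ℝ) < 1 + x := by linarith
  have h3 : (0:ℝ) < 2 - x := by linarith
  have h4 : (0:ℝ) < 1 - x := by linarith
  have h5 : (0:ℝ) < 1 - 2*x := by linarith
  have h6 : (0:ℝ) < (x + 1)/4 := by linarith
  have d1 : HasDerivAt (fun y : ℝ => 1 + y) 1 x := (hasDerivAt_id x).const_add 1
  have d3 : HasDerivAt (fun y : ℝ => 2 - y) (-1) x := by
    simpa using (hasDerivAt_id x).const_sub 2
  have d4 : HasDerivAt (fun y : ℝ => 1 - y) (-1) x := by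
    simpa using (hasDerivAt_id x).const_sub 1
  have d5 : HasDerivAt (fun y : ℝ => 1 - 2*y) (-2) x := by
    simpa using ((hasDerivAt_id x).const_mul 2).const_sub 1
  have d6 : HasDerivAt (fun y : ℝ => (y + 1)/4) (1/4) x := by
    simpa using ((hasDerivAt_id x).add_const 1).div_const 4
  have e3 : HasDerivAt (fun y : ℝ => y - 1) 1 x := (hasDerivAt_id x).sub_const 1
  have e5 : HasDerivAt (fun y : ℝ => 2*y - 1) 2 x := by
    simpa using ((hasDerivAt_id x).const_mul 2).sub_const 1
  have e2 : HasDerivAt (fun y : ℝ => -3 * y) (-3) x := by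
    simpa using (hasDerivAt_id x).const_mul (-3)
  have e6 : HasDerivAt (fun y : ℝ => y) 1 x := hasDerivAt_id x
  have l1 : HasDerivAt (fun y : ℝ => Real.log (1 + y)) (1 / (1 + x)) x := d1.log h1.ne'
  have l3 : HasDerivAt (fun y : ℝ => Real.log (2 - y)) (-1 / (2 - x)) x := d3.log h3.ne'
  have l4 : HasDerivAt (fun y : ℝ => Real.log (1 - y)) (-1 / (1 - x)) x := d4.log h4.ne'
  have l5 : HasDerivAt (fun y : ℝ => Real.log (1 - 2*y)) (-2 / (1 - 2*x)) x := d5.log h5.ne'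
  have l6 : HasDerivAt (fun y : ℝ => Real.log ((y + 1)/4)) ((1/4) / ((x + 1)/4)) x := d6.log h6.ne'
  have l2 : HasDerivAt Real.log x⁻¹ x := Real.hasDerivAt_log h0.ne'
  have T := ((((l1.add (l3.mul d3)).add (l2.mul e2)).add (l4.mul e3)).add (l5.mul e5)).add
    (l6.mul e6)
  have heq : HasDerivAt L (1 / (1 + x) + (-1 / (2 - x) * (2 - x) + Real.log (2 - x) * -1) +
      (x⁻¹ * (-3 * x) + Real.log x * -3) + (-1 / (1 - x) * (x - 1) + Real.log (1 - x) * 1) +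
      (-2 / (1 - 2 * x) * (2 * x - 1) + Real.log (1 - 2 * x) * 2) +
      (1 / 4 / ((x + 1) / 4) * x + Real.log ((x + 1) / 4) * 1)) x := T
  convert heq using 1
  rw [Dv]
  have h5' : (1:ℝ) - 2*x ≠ 0 := h5.ne'
  rw [show -2 / (1 - 2 * x) * (2 * x - 1) = (2:ℝ) by rw [div_mul_eq_mul_div, div_eq_iff h5']; ring]
  field_simp
  ring

lemma Dv_eq {x : ℝ} (hx : x ∈ Set.Ioo (0:ℝ) (1/2)) :
    Dv x = Real.log (((1 - x) * (1 - 2*x)^2 * ((x + 1)/4)) / (x^3 * (2 - x))) := by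
  obtain ⟨h0, h2⟩ := hx
  have h2' : x < 1/2 := h2
  have h3 : (0:ℝ) < 2 - x := by linarith
  have h4 : (0:ℝ) < 1 - x := by linarith
  have h5 : (0:ℝ) < 1 - 2*x := by linarith
  have h6 : (0:ℝ) < (x + 1)/4 := by linarith
  rw [Real.log_div (by positivity) (by positivity), Real.log_mul (by positivity) h6.ne',
    Real.log_mul h4.ne' (by positivity), Real.log_mul (by positivity) h3.ne',
    Real.log_pow, Real.log_pow, Dv]
  push_cast
  ring

lemma Dv_pos {x : ℝ} (hx0 : 0 < x) (hx : x < x₀) : 0 < Dv x := by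
  have hxh : x < 1/2 := by
    have := x0_lt; norm_num at this; linarith
  have hmem : x ∈ Set.Ioo (0:ℝ) (1/2) := ⟨hx0, by norm_num; exact hxh⟩
  have hp : 0 < 1 - 4*x + 3*x^2 - 4*x^3 := by
    have h2 := cubic_anti hx
    have h3 := cubic_x0
    nlinarith
  have hQ : (0:ℝ) < x^3 * (2 - x) := by
    have : (0:ℝ) < 2 - x := by linarith
    positivity
  rw [Dv_eq hmem]
  apply Real.log_pos
  rw [lt_div_iff₀ hQ]
  nlinarith

lemma Dv_neg {x : ℝ} (hx0 : x₀ < x) (hx : x < 1/2) : Dv x < 0 := by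
  have hx0' : 0 < x := by
    have := x0_gt; norm_num at this; linarith
  have hmem : x ∈ Set.Ioo (0:ℝ) (1/2) := ⟨hx0', by norm_num; exact hx⟩
  have hp : 1 - 4*x + 3*x^2 - 4*x^3 < 0 := by
    have h2 := cubic_anti hx0
    have h3 := cubic_x0
    nlinarith
  have hQ : (0:ℝ) < x^3 * (2 - x) := by
    have : (0:ℝ) < 2 - x := by linarith
    positivity
  have hN : (0:ℝ) < (1 - x) * (1 - 2*x)^2 * ((x + 1)/4) := by
    have h4 : (0:ℝ) < 1 - x := by linarith
    have h5 : (0:ℝ) < 1 - 2*x := by linarith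
    positivity
  rw [Dv_eq hmem]
  apply Real.log_neg (by positivity)
  rw [div_lt_one hQ]
  nlinarith

lemma L_le_L_x0 {x : ℝ} (hx : x ∈ Set.Ioo (0:ℝ) (1/2)) : L x ≤ L x₀ := by
  have hx0m := x0_mem
  have hmono : StrictMonoOn L (Set.Ioc (0:ℝ) x₀) := by
    apply strictMonoOn_of_deriv_pos (convex_Ioc 0 x₀)
    · intro y hy
      exact (hasDerivAt_L ⟨hy.1, lt_of_le_of_lt hy.2 hx0m.2⟩).continuousAt.continuousWithinAt
    · intro y hy
      rw [interior_Ioc] at hy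
      rw [(hasDerivAt_L ⟨hy.1, lt_trans hy.2 hx0m.2⟩).deriv]
      exact Dv_pos hy.1 hy.2
  have hanti : StrictAntiOn L (Set.Ico x₀ (1/2:ℝ)) := by
    apply strictAntiOn_of_deriv_neg (convex_Ico x₀ (1/2))
    · intro y hy
      exact (hasDerivAt_L ⟨lt_of_lt_of_le hx0m.1 hy.1, hy.2⟩).continuousAt.continuousWithinAt
    · intro y hy
      rw [interior_Ico] at hy
      rw [(hasDerivAt_L ⟨lt_trans hx0m.1 hy.1, hy.2⟩).deriv]
      exact Dv_neg hy.1 hy.2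
  rcases lt_trichotomy x x₀ with h | h | h
  · exact le_of_lt (hmono ⟨hx.1, h.le⟩ ⟨hx0m.1, le_refl _⟩ h)
  · rw [h]
  · exact le_of_lt (hanti ⟨le_refl _, hx0m.2⟩ ⟨h.le, hx.2⟩ h)

/- Numeric log bounds via the Taylor series of `log (1 - x)`. -/

lemma log_ge_aux {x lb : ℝ} (h0 : 0 ≤ x) (h1 : x < 1)
    (h2 : lb ≤ -(∑ i ∈ Finset.range 14, x ^ (i + 1) / (i + 1)) - x ^ 15 / (1 - x)) :
    lb ≤ Real.log (1 - x) := by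
  have h := Real.abs_log_sub_add_sum_range_le (x := x) (by rwa [abs_of_nonneg h0]) 14
  rw [abs_of_nonneg h0, abs_le] at h
  linarith [h.1]

lemma log_le_aux {x ub : ℝ} (h0 : 0 ≤ x) (h1 : x < 1)
    (h2 : -(∑ i ∈ Finset.range 14, x ^ (i + 1) / (i + 1)) + x ^ 15 / (1 - x) ≤ ub) :
    Real.log (1 - x) ≤ ub := by
  have h := Real.abs_log_sub_add_sum_range_le (x := x) (by rwa [abs_of_nonneg h0]) 14
  rw [abs_of_nonneg h0, abs_le] at h
  linarith [h.2]

lemma log1p_le_aux {x ub : ℝ} (h0 : 0 ≤ x) (h1 : x < 1)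
    (h2 : -(∑ i ∈ Finset.range 14, (-x) ^ (i + 1) / (i + 1)) + x ^ 15 / (1 - x) ≤ ub) :
    Real.log (1 + x) ≤ ub := by
  have habs : |(-x)| = x := by rw [abs_neg, abs_of_nonneg h0]
  have h := Real.abs_log_sub_add_sum_range_le (x := -x) (by rwa [habs]) 14
  rw [habs, abs_le] at h
  have he : (1:ℝ) - -x = 1 + x := by ring
  rw [he] at h
  linarith [h.2]

lemma log1p_ge_aux {x lb : ℝ} (h0 : 0 ≤ x) (h1 : x < 1)
    (h2 : lb ≤ -(∑ i ∈ Finset.range 14, (-x) ^ (i + 1) / (i + 1)) - x ^ 15 / (1 - x)) :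
    lb ≤ Real.log (1 + x) := by
  have habs : |(-x)| = x := by rw [abs_neg, abs_of_nonneg h0]
  have h := Real.abs_log_sub_add_sum_range_le (x := -x) (by rwa [habs]) 14
  rw [habs, abs_le] at h
  have he : (1:ℝ) - -x = 1 + x := by ring
  rw [he] at h
  linarith [h.1]

lemma num_u1 : Real.log (1 + (0.288391892620 : ℝ)) ≤ 0.2533948565989 :=
  log1p_le_aux (by norm_num) (by norm_num) (by norm_num [Finset.sum_range_succ])

lemma num_u2p : Real.log (1 - (0.1441959463085 : ℝ)) ≤ -0.1557138382827 :=
  log_le_aux (by norm_num) (by norm_num) (by norm_num [Finset.sum_range_succ])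

lemma num_l3p : (0.1428593755610 : ℝ) ≤ Real.log (1 + (0.153567570468 : ℝ)) :=
  log1p_ge_aux (by norm_num) (by norm_num) (by norm_num [Finset.sum_range_succ])

lemma num_l4 : (-0.3402279405153 : ℝ) ≤ Real.log (1 - (0.288391892620 : ℝ)) :=
  log_ge_aux (by norm_num) (by norm_num) (by norm_num [Finset.sum_range_succ])

lemma num_l5p : (-0.1667249039625 : ℝ) ≤ Real.log (1 - (0.15356757048 : ℝ)) :=
  log_ge_aux (by norm_num) (by norm_num) (by norm_num [Finset.sum_range_succ])

lemma num_l7p : (-0.2442235567405 : ℝ) ≤ Real.log (1 - (0.2166875 : ℝ)) :=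
  log_ge_aux (by norm_num) (by norm_num) (by norm_num [Finset.sum_range_succ])

lemma log_four : Real.log 4 = 2 * Real.log 2 := by
  rw [show (4:ℝ) = 2^2 by norm_num, Real.log_pow]
  push_cast; ring

lemma L_x0_lt : L x₀ < Real.log 12.533 := by
  have ha := x0_gt
  have hb := x0_lt
  have h2lb := Real.log_two_gt_d9
  have h2ub := Real.log_two_lt_d9
  -- bounds on the six logarithms at x₀
  have hA : Real.log (1 + x₀) ≤ 0.2533948565989 := by
    calc Real.log (1 + x₀) ≤ Real.log (1 + 0.288391892620) :=
          Real.log_le_log (by linarith) (by linarith)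
      _ ≤ 0.2533948565989 := num_u1
  have hB0 : 0 ≤ Real.log (2 - x₀) := Real.log_nonneg (by linarith)
  have hBu : Real.log (2 - x₀) ≤ 0.6931471808 + -0.1557138382827 := by
    calc Real.log (2 - x₀) ≤ Real.log (2 - 0.288391892617) :=
          Real.log_le_log (by linarith) (by linarith)
      _ = Real.log 2 + Real.log (1 - 0.1441959463085) := by
          rw [show (2 - 0.288391892617 : ℝ) = 2 * (1 - 0.1441959463085) by norm_num,
            Real.log_mul (by norm_num) (by norm_num)]
      _ ≤ 0.6931471808 + -0.1557138382827 := add_le_add h2ub.le num_u2p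
  have hCl : (0.1428593755610 - 2 * 0.6931471808 : ℝ) ≤ Real.log x₀ := by
    have h1 : Real.log (0.288391892617 : ℝ) ≤ Real.log x₀ :=
      Real.log_le_log (by norm_num) (by linarith)
    have h2 : Real.log (0.288391892617 : ℝ) =
        Real.log (1 + 0.153567570468) - Real.log 4 := by
      rw [show (0.288391892617 : ℝ) = (1 + 0.153567570468) / 4 by norm_num,
        Real.log_div (by norm_num) (by norm_num)]
    rw [h2] at h1
    rw [log_four] at h1
    linarith [num_l3p]
  have hCu : Real.log x₀ ≤ 0 := Real.log_nonpos (by linarith) (by linarith)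
  have hDl : (-0.3402279405153 : ℝ) ≤ Real.log (1 - x₀) := by
    calc (-0.3402279405153 : ℝ) ≤ Real.log (1 - 0.288391892620) := num_l4
      _ ≤ Real.log (1 - x₀) := Real.log_le_log (by norm_num) (by linarith)
  have hEl : (-0.1667249039625 - 0.6931471808 : ℝ) ≤ Real.log (1 - 2 * x₀) := by
    have h1 : Real.log (1 - 2 * (0.288391892620 : ℝ)) ≤ Real.log (1 - 2 * x₀) :=
      Real.log_le_log (by norm_num) (by linarith)
    have h2 : Real.log (1 - 2 * (0.288391892620 : ℝ)) =
        Real.log (1 - 0.15356757048) - Real.log 2 := by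
      rw [show (1 - 2 * 0.288391892620 : ℝ) = (1 - 0.15356757048) / 2 by norm_num,
        Real.log_div (by norm_num) (by norm_num)]
    rw [h2] at h1
    linarith [num_l5p]
  have hFu : Real.log ((x₀ + 1) / 4) ≤ 0.2533948565989 - 2 * 0.6931471803 := by
    have h1 : Real.log ((x₀ + 1) / 4) ≤ Real.log ((0.288391892620 + 1) / 4) :=
      Real.log_le_log (by linarith) (by linarith)
    have h2 : Real.log (((0.288391892620 : ℝ) + 1) / 4) =
        Real.log (1 + 0.288391892620) - Real.log 4 := by
      rw [show ((0.288391892620 : ℝ) + 1) / 4 = (1 + 0.288391892620) / 4 by norm_num,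
        Real.log_div (by norm_num) (by norm_num)]
    rw [h2, log_four] at h1
    linarith [num_u1]
  have hF0 : Real.log ((x₀ + 1) / 4) ≤ 0 := Real.log_nonpos (by linarith) (by linarith)
  -- the target lower bound
  have hT : (-0.2442235567405 + 4 * 0.6931471803 : ℝ) < Real.log 12.533 := by
    have h2 : Real.log (12.533 : ℝ) = Real.log (1 - 0.2166875) + 4 * Real.log 2 := by
      rw [show (12.533 : ℝ) = (1 - 0.2166875) * 2^4 by norm_num,
        Real.log_mul (by norm_num) (by norm_num), Real.log_pow]
      push_cast; ring
    rw [h2]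
    have := num_l7p
    linarith
  -- term-by-term bounds
  have hL : L x₀ = Real.log (1 + x₀) + Real.log (2 - x₀) * (2 - x₀) + Real.log x₀ * (-3 * x₀) +
      Real.log (1 - x₀) * (x₀ - 1) + Real.log (1 - 2 * x₀) * (2 * x₀ - 1) +
      Real.log ((x₀ + 1) / 4) * x₀ := rfl
  have P2 : Real.log (2 - x₀) * (2 - x₀) ≤
      (0.6931471808 + -0.1557138382827) * (2 - 0.288391892617) :=
    mul_le_mul hBu (by linarith) (by linarith) (by norm_num)
  have P3 : Real.log x₀ * (-3 * x₀) ≤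
      (-(0.1428593755610 - 2 * 0.6931471808)) * (3 * 0.288391892620) := by
    have h := mul_le_mul (neg_le_neg hCl) (by linarith : 3 * x₀ ≤ 3 * 0.288391892620)
      (by linarith : (0:ℝ) ≤ 3 * x₀) (by norm_num : (0:ℝ) ≤ -(0.1428593755610 - 2 * 0.6931471808))
    calc Real.log x₀ * (-3 * x₀) = (-Real.log x₀) * (3 * x₀) := by ring
      _ ≤ _ := h
  have P4 : Real.log (1 - x₀) * (x₀ - 1) ≤ (-(-0.3402279405153)) * (1 - 0.288391892617) := by
    have h := mul_le_mul (neg_le_neg hDl) (by linarith : 1 - x₀ ≤ 1 - 0.288391892617)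
      (by linarith : (0:ℝ) ≤ 1 - x₀) (by norm_num : (0:ℝ) ≤ -(-0.3402279405153 : ℝ))
    calc Real.log (1 - x₀) * (x₀ - 1) = (-Real.log (1 - x₀)) * (1 - x₀) := by ring
      _ ≤ _ := h
  have P5 : Real.log (1 - 2 * x₀) * (2 * x₀ - 1) ≤
      (-(-0.1667249039625 - 0.6931471808)) * (1 - 2 * 0.288391892617) := by
    have h := mul_le_mul (neg_le_neg hEl) (by linarith : 1 - 2 * x₀ ≤ 1 - 2 * 0.288391892617)
      (by linarith : (0:ℝ) ≤ 1 - 2 * x₀)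
      (by norm_num : (0:ℝ) ≤ -(-0.1667249039625 - 0.6931471808 : ℝ))
    calc Real.log (1 - 2 * x₀) * (2 * x₀ - 1) = (-Real.log (1 - 2 * x₀)) * (1 - 2 * x₀) := by ring
      _ ≤ _ := h
  have P6 : Real.log ((x₀ + 1) / 4) * x₀ ≤
      (0.2533948565989 - 2 * 0.6931471803) * 0.288391892617 := by
    have q1 : Real.log ((x₀ + 1) / 4) * x₀ ≤ Real.log ((x₀ + 1) / 4) * 0.288391892617 :=
      mul_le_mul_of_nonpos_left (by linarith) hF0
    have q2 : Real.log ((x₀ + 1) / 4) * 0.288391892617 ≤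
        (0.2533948565989 - 2 * 0.6931471803) * 0.288391892617 :=
      mul_le_mul_of_nonneg_right hFu (by norm_num)
    linarith
  rw [hL]
  have hfinal : (0.2533948565989 : ℝ) + (0.6931471808 + -0.1557138382827) * (2 - 0.288391892617)
      + (-(0.1428593755610 - 2 * 0.6931471808)) * (3 * 0.288391892620)
      + (-(-0.3402279405153)) * (1 - 0.288391892617)
      + (-(-0.1667249039625 - 0.6931471808)) * (1 - 2 * 0.288391892617)
      + (0.2533948565989 - 2 * 0.6931471803) * 0.288391892617
      < -0.2442235567405 + 4 * 0.6931471803 := by norm_num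
  linarith

/-- `g` attains its maximum on `(0, 1/2)` at `x₀`, and `g(x₀) < 12.533`. -/
theorem stmt_11 :
    x₀ ∈ Set.Ioo (0 : ℝ) (1 / 2) ∧ IsMaxOn g (Set.Ioo (0 : ℝ) (1 / 2)) x₀ ∧
      g x₀ < 12.533 := by
  refine ⟨x0_mem, ?_, ?_⟩
  · intro x hx
    simp only [Set.mem_setOf_eq]
    rw [g_eq_exp_L hx, g_eq_exp_L x0_mem]
    exact Real.exp_le_exp.mpr (L_le_L_x0 hx)
  · rw [g_eq_exp_L x0_mem]
    have h := L_x0_lt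
    calc Real.exp (L x₀) < Real.exp (Real.log 12.533) := Real.exp_lt_exp.mpr h
      _ = 12.533 := Real.exp_log (by norm_num)
end

section
/- For x = k/n fixed in (0, 1/2), the n-th root of the summand f(n,k) = (n+k−1)!(2n−k)!/(k!(n+1−k)!(2k−1)!(2n−2k+1)!) · binomial(2n−2k, n−1) converges as n → ∞ (with k = ⌊xn⌋) to g(x) = (1+x)(2−x)^{2−x} x^{−3x} (1−x)^{x−1} (1−2x)^{2x−1} ((x+1)/4)^x. -/
open Real Nat Filter

/-- The `k`-th summand in the upper bound for `W_3(n)`. -/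
noncomputable def f (n k : ℕ) : ℝ :=
  ((n + k - 1)! * (2 * n - k)! : ℝ) /
      ((k)! * (n + 1 - k)! * (2 * k - 1)! * (2 * n - 2 * k + 1)!) *
    (Nat.choose (2 * n - 2 * k) (n - 1) : ℝ)

lemma logn_div_tendsto : Tendsto (fun n : ℕ => Real.log n / n) atTop (nhds 0) := by
  have := Real.isLittleO_log_id_atTop.comp_tendsto tendsto_natCast_atTop_atTop
  simpa [Function.comp] using this.tendsto_div_nhds_zero

lemma logfac_lim {a : ℕ → ℕ} {c : ℝ} (hc : 0 < c)
    (ha : Tendsto (fun n => (a n : ℝ) / n) atTop (nhds c)) :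
    Tendsto (fun n : ℕ => (1 / n) * Real.log (a n)! - ((a n : ℝ) / n) * Real.log n)
      atTop (nhds (c * Real.log c - c)) := by
  have haT : Tendsto a atTop atTop := by
    have h1 : ∀ᶠ n : ℕ in atTop, c / 2 < (a n : ℝ) / n :=
      ha.eventually (eventually_gt_nhds (by linarith))
    rw [tendsto_atTop_atTop]
    intro b
    have h2 : Tendsto (fun n : ℕ => c / 2 * n) atTop atTop :=
      Tendsto.const_mul_atTop (by linarith) tendsto_natCast_atTop_atTop
    obtain ⟨N, hN⟩ := (tendsto_atTop_atTop.mp h2 (b : ℝ))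
    obtain ⟨M, hM⟩ := eventually_atTop.mp h1
    refine ⟨max N (max M 1), fun n hn => ?_⟩
    have hn1 : 1 ≤ n := le_trans (le_max_of_le_right (le_max_right _ _)) hn
    have := hM n (le_trans (le_max_of_le_right (le_max_left _ _)) hn)
    have hb : (b : ℝ) ≤ c / 2 * n := hN n (le_trans (le_max_left _ _) hn)
    have hnp : (0 : ℝ) < n := by exact_mod_cast hn1
    have : (b : ℝ) ≤ (a n : ℝ) := by
      calc (b:ℝ) ≤ c/2 * n := hb
        _ ≤ (a n : ℝ)/n * n := by nlinarith
        _ = a n := by field_simp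
    exact_mod_cast this
  have hinv : Tendsto (fun n : ℕ => (1 : ℝ) / n) atTop (nhds 0) :=
    tendsto_one_div_atTop_nhds_zero_nat
  have hlogan : Tendsto (fun n : ℕ => Real.log ((a n : ℝ) / n)) atTop (nhds (Real.log c)) :=
    ((Real.continuousAt_log hc.ne').tendsto.comp ha)
  have hS : Tendsto (fun n : ℕ => Real.log (Stirling.stirlingSeq (a n))) atTop
      (nhds (Real.log (Real.sqrt π))) :=
    ((Real.continuousAt_log (by positivity)).tendsto.comp
      (Stirling.tendsto_stirlingSeq_sqrt_pi.comp haT))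
  have T1 : Tendsto (fun n : ℕ => (1 / n) * Real.log (Stirling.stirlingSeq (a n))) atTop
      (nhds 0) := by simpa using hinv.mul hS
  have T2 : Tendsto (fun n : ℕ =>
      (1 / n) * (1 / 2 * Real.log (2 * (a n : ℝ)))) atTop (nhds 0) := by
    have key : Tendsto (fun n : ℕ =>
        (1/2 : ℝ) * ((1/n) * Real.log 2 + (1/n) * Real.log ((a n : ℝ)/n) + Real.log n / n))
        atTop (nhds ((1/2) * (0 * Real.log 2 + 0 * Real.log c + 0))) :=
      (((hinv.mul tendsto_const_nhds).add (hinv.mul hlogan)).add logn_div_tendsto).const_mul _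
    rw [show ((1:ℝ)/2) * (0 * Real.log 2 + 0 * Real.log c + 0) = 0 by ring] at key
    refine key.congr' ?_
    filter_upwards [haT.eventually_ge_atTop 1, eventually_ge_atTop 1] with n h1 h2
    have hn : (0:ℝ) < n := by exact_mod_cast h2
    have han : (0:ℝ) < a n := by exact_mod_cast h1
    rw [Real.log_mul two_ne_zero han.ne',
      show Real.log (a n : ℝ) = Real.log ((a n:ℝ)/n) + Real.log n by
        rw [Real.log_div han.ne' hn.ne']; ring]
    ring
  have T3 : Tendsto (fun n : ℕ => ((a n : ℝ)/n) * Real.log ((a n : ℝ)/n)) atTop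
      (nhds (c * Real.log c)) := ha.mul hlogan
  have key := ((T1.add T2).add (T3.sub ha))
  rw [show (0:ℝ) + 0 + (c * Real.log c - c) = c * Real.log c - c by ring] at key
  refine key.congr' ?_
  filter_upwards [haT.eventually_ge_atTop 1, eventually_ge_atTop 1] with n h1 h2
  have hn : (0:ℝ) < n := by exact_mod_cast h2
  have han : (0:ℝ) < a n := by exact_mod_cast h1
  have hfac : Real.log (a n)! = Real.log (Stirling.stirlingSeq (a n))
      + 1/2 * Real.log (2 * (a n : ℝ)) + (a n : ℝ) * Real.log ((a n : ℝ) / Real.exp 1) := by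
    have := Stirling.log_stirlingSeq_formula (a n)
    linarith
  rw [hfac]
  rw [Real.log_div han.ne' (Real.exp_ne_zero 1), Real.log_exp,
    show Real.log (a n : ℝ) = Real.log ((a n:ℝ)/n) + Real.log n by
      rw [Real.log_div han.ne' hn.ne']; ring]
  field_simp
  ring

lemma aux_div {k : ℕ → ℕ} {x : ℝ} (hk : Tendsto (fun n => (k n : ℝ)/n) atTop (nhds x))
    (a : ℕ → ℕ) (α β γ : ℝ)
    (h : ∀ᶠ n : ℕ in atTop, (a n : ℝ) = α * n + β * k n + γ) :
    Tendsto (fun n => (a n : ℝ)/n) atTop (nhds (α + β * x)) := by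
  have key : Tendsto (fun n : ℕ => α + β * ((k n:ℝ)/n) + γ * (1/n)) atTop
      (nhds (α + β*x + γ*0)) :=
    (tendsto_const_nhds.add (hk.const_mul β)).add
      (tendsto_one_div_atTop_nhds_zero_nat.const_mul γ)
  rw [show α + β*x + γ*0 = α + β*x by ring] at key
  refine key.congr' ?_
  filter_upwards [h, eventually_ge_atTop 1] with n h1 h2
  have hn : ((n:ℝ)) ≠ 0 := by positivity
  rw [h1]; field_simp

lemma floor_div_tendsto {x : ℝ} (hx : 0 ≤ x) :
    Tendsto (fun n : ℕ => (⌊x * n⌋₊ : ℝ)/n) atTop (nhds x) := by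
  have hlow : Tendsto (fun n : ℕ => x - 1/n) atTop (nhds x) := by
    simpa using (tendsto_const_nhds : Tendsto (fun _ : ℕ => x) atTop (nhds x)).sub tendsto_one_div_atTop_nhds_zero_nat
  refine tendsto_of_tendsto_of_tendsto_of_le_of_le' hlow tendsto_const_nhds ?_ ?_
  · filter_upwards [eventually_ge_atTop 1] with n hn
    have hnp : (0:ℝ) < n := by exact_mod_cast hn
    have h2 : x * n < ⌊x * n⌋₊ + 1 := Nat.lt_floor_add_one _
    rw [sub_le_iff_le_add, ← add_div, le_div_iff₀ hnp]
    nlinarith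
  · filter_upwards [eventually_ge_atTop 1] with n hn
    have hnp : (0:ℝ) < n := by exact_mod_cast hn
    rw [div_le_iff₀ hnp]
    exact Nat.floor_le (by positivity)

lemma tendsto_nhds_congr' {α : Type*} [TopologicalSpace α] {f : ℕ → α} {a b : α}
    (h : a = b) (hf : Filter.Tendsto f atTop (nhds a)) : Filter.Tendsto f atTop (nhds b) :=
  h ▸ hf

lemma main_aux {x : ℝ} (hx0 : 0 < x) (hx2 : x < 1/2) (k : ℕ → ℕ)
    (hkd : Tendsto (fun n => (k n : ℝ)/n) atTop (nhds x)) :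
    Tendsto (fun n : ℕ => (f n (k n)) ^ ((1 : ℝ) / n)) atTop (nhds (g x)) := by
  have fp : ∀ m : ℕ, (0:ℝ) < (m ! : ℝ) := fun m => by exact_mod_cast m.factorial_pos
  -- basic eventual conditions
  have h2k : Tendsto (fun n => ((2 * k n + 2 : ℕ) : ℝ)/n) atTop (nhds (0 + 2 * x)) :=
    aux_div hkd _ 0 2 2 (by filter_upwards with n; push_cast; ring)
  have hev : ∀ᶠ n : ℕ in atTop, 1 ≤ k n ∧ 2 * k n + 2 ≤ n := by
    have h1 : ∀ᶠ n : ℕ in atTop, x/2 < (k n : ℝ)/n :=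
      hkd.eventually (eventually_gt_nhds (by linarith))
    have h2 : ∀ᶠ n : ℕ in atTop, ((2 * k n + 2 : ℕ) : ℝ)/n < 1 :=
      h2k.eventually (eventually_lt_nhds (by linarith))
    filter_upwards [h1, h2, eventually_ge_atTop 1] with n ha hb hc
    have hnp : (0:ℝ) < n := by exact_mod_cast hc
    constructor
    · by_contra h
      have : k n = 0 := by omega
      rw [this] at ha
      simp at ha
      nlinarith
    · have : ((2 * k n + 2 : ℕ) : ℝ) < n := by
        rw [div_lt_one hnp] at hb; exact hb
      exact_mod_cast this.le
  -- the nine sequences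
  have t1 := logfac_lim (show (0:ℝ) < 1 + x by linarith)
    (tendsto_nhds_congr' (by ring : (1 + 1*x : ℝ) = 1 + x) <| aux_div hkd (fun n => n + k n - 1) 1 1 (-1) (by
      filter_upwards [hev] with n ⟨h1, h2⟩
      rw [Nat.cast_sub (by omega : 1 ≤ n + k n)]; push_cast; ring))
  have t2 := logfac_lim (show (0:ℝ) < 2 - x by linarith)
    (tendsto_nhds_congr' (by ring : (2 + -1*x : ℝ) = 2 - x) <| aux_div hkd (fun n => 2*n - k n) 2 (-1) 0 (by
      filter_upwards [hev] with n ⟨h1, h2⟩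
      rw [Nat.cast_sub (by omega : k n ≤ 2*n)]; push_cast; ring))
  have t3 := logfac_lim (show (0:ℝ) < 2 - 2*x by linarith)
    (tendsto_nhds_congr' (by ring : (2 + -2*x : ℝ) = 2 - 2*x) <| aux_div hkd (fun n => 2*n - 2*k n) 2 (-2) 0 (by
      filter_upwards [hev] with n ⟨h1, h2⟩
      rw [Nat.cast_sub (by omega : 2*k n ≤ 2*n)]; push_cast; ring))
  have t4 := logfac_lim hx0 (tendsto_nhds_congr' (by ring : (0 + 1*x : ℝ) = x) <| aux_div hkd (fun n => k n) 0 1 0 (by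
      filter_upwards with n; push_cast; ring))
  have t5 := logfac_lim (show (0:ℝ) < 1 - x by linarith)
    (tendsto_nhds_congr' (by ring : (1 + -1*x : ℝ) = 1 - x) <| aux_div hkd (fun n => n + 1 - k n) 1 (-1) 1 (by
      filter_upwards [hev] with n ⟨h1, h2⟩
      rw [Nat.cast_sub (by omega : k n ≤ n + 1)]; push_cast; ring))
  have t6 := logfac_lim (show (0:ℝ) < 2*x by linarith)
    (tendsto_nhds_congr' (by ring : (0 + 2*x : ℝ) = 2*x) <| aux_div hkd (fun n => 2*k n - 1) 0 2 (-1) (by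
      filter_upwards [hev] with n ⟨h1, h2⟩
      rw [Nat.cast_sub (by omega : 1 ≤ 2*k n)]; push_cast; ring))
  have t7 := logfac_lim (show (0:ℝ) < 2 - 2*x by linarith)
    (tendsto_nhds_congr' (by ring : (2 + -2*x : ℝ) = 2 - 2*x) <| aux_div hkd (fun n => 2*n - 2*k n + 1) 2 (-2) 1 (by
      filter_upwards [hev] with n ⟨h1, h2⟩
      rw [Nat.cast_add, Nat.cast_sub (by omega : 2*k n ≤ 2*n)]; push_cast; ring))
  have t8 := logfac_lim (show (0:ℝ) < 1 by norm_num)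
    (tendsto_nhds_congr' (by ring : (1 + 0*x : ℝ) = 1) <| aux_div hkd (fun n => n - 1) 1 0 (-1) (by
      filter_upwards [eventually_ge_atTop 1] with n h1
      rw [Nat.cast_sub (by omega : 1 ≤ n)]; push_cast; ring))
  have t9 := logfac_lim (show (0:ℝ) < 1 - 2*x by linarith)
    (tendsto_nhds_congr' (by ring : (1 + -2*x : ℝ) = 1 - 2*x) <| aux_div hkd (fun n => 2*n - 2*k n - (n - 1)) 1 (-2) 1 (by
      filter_upwards [hev] with n ⟨h1, h2⟩
      rw [Nat.cast_sub (by omega : n - 1 ≤ 2*n - 2*k n),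
        Nat.cast_sub (by omega : 2*k n ≤ 2*n), Nat.cast_sub (by omega : 1 ≤ n)]
      push_cast; ring))
  -- combine
  have bigT := ((((((((t1.add t2).add t3).sub t4).sub t5).sub t6).sub t7).sub t8).sub t9).add
    (logn_div_tendsto.const_mul (-2))
  set V : ℝ := ((1 + x) * Real.log (1 + x) - (1 + x) + ((2 - x) * Real.log (2 - x) - (2 - x)) +
      ((2 - 2*x) * Real.log (2 - 2*x) - (2 - 2*x)) - (x * Real.log x - x) -
      ((1 - x) * Real.log (1 - x) - (1 - x)) - (2*x * Real.log (2*x) - 2*x) -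
      ((2 - 2*x) * Real.log (2 - 2*x) - (2 - 2*x)) - (1 * Real.log 1 - 1) -
      ((1 - 2*x) * Real.log (1 - 2*x) - (1 - 2*x))) + (-2) * 0 with hV
  -- the eventual formula for f
  have hfval : ∀ᶠ n : ℕ in atTop, f n (k n) =
      ((n + k n - 1)! : ℝ) * ((2*n - k n)! : ℝ) * ((2*n - 2*k n)! : ℝ) /
      (((k n)! : ℝ) * ((n+1-k n)! : ℝ) * ((2*k n-1)! : ℝ) * ((2*n-2*k n+1)! : ℝ) *
        ((n-1)! : ℝ) * ((2*n-2*k n - (n-1))! : ℝ)) := by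
    filter_upwards [hev] with n ⟨h1, h2⟩
    have hle : n - 1 ≤ 2*n - 2*k n := by omega
    simp only [f]
    rw [Nat.cast_choose ℝ hle]
    have d1 := (fp (k n)).ne'
    have d2 := (fp (n+1-k n)).ne'
    have d3 := (fp (2*k n-1)).ne'
    have d4 := (fp (2*n-2*k n+1)).ne'
    have d5 := (fp (n-1)).ne'
    have d6 := (fp (2*n-2*k n-(n-1))).ne'
    field_simp
  have hfpos : ∀ᶠ n : ℕ in atTop, 0 < f n (k n) := by
    filter_upwards [hfval] with n h
    rw [h]
    exact div_pos (by positivity) (by positivity)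
  -- log f tendsto
  have hT : Tendsto (fun n : ℕ => (1 / n) * Real.log (f n (k n))) atTop (nhds V) := by
    refine bigT.congr' ?_
    filter_upwards [hev, hfval, eventually_ge_atTop 1] with n hn hfv hn1
    obtain ⟨h1, h2⟩ := hn
    have hnp : (0:ℝ) < n := by exact_mod_cast hn1
    have hlog : Real.log (f n (k n)) =
        Real.log ((n + k n - 1)! : ℝ) + Real.log ((2*n - k n)! : ℝ) +
        Real.log ((2*n - 2*k n)! : ℝ) -
        (Real.log (((k n)!) : ℝ) + Real.log ((n+1-k n)! : ℝ) + Real.log ((2*k n-1)! : ℝ) +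
         Real.log ((2*n-2*k n+1)! : ℝ) + Real.log ((n-1)! : ℝ) +
         Real.log ((2*n-2*k n - (n-1))! : ℝ)) := by
      rw [hfv, Real.log_div (by positivity) (by positivity),
        Real.log_mul (by positivity) (by positivity),
        Real.log_mul (by positivity) (by positivity),
        Real.log_mul (by positivity) (by positivity),
        Real.log_mul (by positivity) (by positivity),
        Real.log_mul (by positivity) (by positivity),
        Real.log_mul (by positivity) (by positivity),
        Real.log_mul (by positivity) (by positivity)]
    have e1 : ((n + k n - 1 : ℕ) : ℝ) = (n:ℝ) + k n - 1 := by
      rw [Nat.cast_sub (by omega : 1 ≤ n + k n)]; push_cast; ring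
    have e2 : ((2*n - k n : ℕ) : ℝ) = 2*(n:ℝ) - k n := by
      rw [Nat.cast_sub (by omega : k n ≤ 2*n)]; push_cast; ring
    have e3 : ((2*n - 2*k n : ℕ) : ℝ) = 2*(n:ℝ) - 2*k n := by
      rw [Nat.cast_sub (by omega : 2*k n ≤ 2*n)]; push_cast; ring
    have e5 : ((n + 1 - k n : ℕ) : ℝ) = (n:ℝ) + 1 - k n := by
      rw [Nat.cast_sub (by omega : k n ≤ n + 1)]; push_cast; ring
    have e6 : ((2*k n - 1 : ℕ) : ℝ) = 2*(k n:ℝ) - 1 := by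
      rw [Nat.cast_sub (by omega : 1 ≤ 2*k n)]; push_cast; ring
    have e7 : ((2*n - 2*k n + 1 : ℕ) : ℝ) = 2*(n:ℝ) - 2*k n + 1 := by
      rw [Nat.cast_add, Nat.cast_sub (by omega : 2*k n ≤ 2*n)]; push_cast; ring
    have e8 : ((n - 1 : ℕ) : ℝ) = (n:ℝ) - 1 := by
      rw [Nat.cast_sub (by omega : 1 ≤ n)]; push_cast; ring
    have e9 : ((2*n - 2*k n - (n - 1) : ℕ) : ℝ) = (n:ℝ) - 2*k n + 1 := by
      rw [Nat.cast_sub (by omega : n - 1 ≤ 2*n - 2*k n),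
        Nat.cast_sub (by omega : 2*k n ≤ 2*n), Nat.cast_sub (by omega : 1 ≤ n)]
      push_cast; ring
    rw [hlog, e1, e2, e3, e5, e6, e7, e8, e9]
    field_simp
    ring
  -- value equals log (g x)
  have h1x : (0:ℝ) < 1 + x := by linarith
  have h2x : (0:ℝ) < 2 - x := by linarith
  have h3x : (0:ℝ) < 1 - x := by linarith
  have h4x : (0:ℝ) < 1 - 2*x := by linarith
  have hgpos : 0 < g x := by
    simp only [g]
    have := Real.rpow_pos_of_pos h2x (2 - x)
    have := Real.rpow_pos_of_pos hx0 (-3*x)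
    have := Real.rpow_pos_of_pos h3x (x - 1)
    have := Real.rpow_pos_of_pos h4x (2*x - 1)
    have := Real.rpow_pos_of_pos (show (0:ℝ) < (x+1)/4 by linarith) x
    positivity
  have hVg : V = Real.log (g x) := by
    have lg : Real.log (g x) = Real.log (1 + x) + (2 - x) * Real.log (2 - x) +
        (-3*x) * Real.log x + (x - 1) * Real.log (1 - x) +
        (2*x - 1) * Real.log (1 - 2*x) + x * (Real.log (1 + x) - 2 * Real.log 2) := by
      simp only [g]
      rw [Real.log_mul (by positivity) (by positivity),
        Real.log_mul (by positivity) (by positivity),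
        Real.log_mul (by positivity) (by positivity),
        Real.log_mul (by positivity) (by positivity),
        Real.log_mul (by positivity) (by positivity),
        Real.log_rpow h2x, Real.log_rpow hx0, Real.log_rpow h3x, Real.log_rpow h4x,
        Real.log_rpow (show (0:ℝ) < (x+1)/4 by linarith),
        Real.log_div (by linarith : x + 1 ≠ 0) (by norm_num : (4:ℝ) ≠ 0),
        show x + 1 = 1 + x by ring,
        show (4:ℝ) = 2^2 by norm_num, Real.log_pow]
      push_cast
      ring
    rw [hV, lg, Real.log_one,
      show Real.log (2*x) = Real.log 2 + Real.log x from
        Real.log_mul two_ne_zero hx0.ne',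
      show Real.log (2 - 2*x) = Real.log 2 + Real.log (1 - x) by
        rw [show (2:ℝ) - 2*x = 2*(1-x) by ring]; exact Real.log_mul two_ne_zero h3x.ne']
    ring
  rw [hVg] at hT
  -- conclude via exp
  have hexp := (Real.continuous_exp.tendsto _).comp hT
  rw [Real.exp_log hgpos] at hexp
  refine hexp.congr' ?_
  filter_upwards [hfpos] with n hpos
  show Real.exp ((1/n) * Real.log (f n (k n))) = (f n (k n)) ^ ((1:ℝ)/n)
  rw [Real.rpow_def_of_pos hpos, mul_comm]

/-- For fixed `x ∈ (0, 1/2)`, with `k = ⌊xn⌋`, the `n`-th root of the summand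
`f(n,k)` converges to `g(x)` as `n → ∞`. -/
theorem stmt_13 (x : ℝ) (hx : x ∈ Set.Ioo (0 : ℝ) (1 / 2)) :
    Tendsto (fun n : ℕ => (f n ⌊x * n⌋₊) ^ ((1 : ℝ) / n)) atTop (nhds (g x)) :=
  main_aux hx.1 hx.2 (fun n => ⌊x * n⌋₊) (floor_div_tendsto hx.1.le)
end
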